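/- Let m ≤ n be positive integers with m even and n odd. Then γ'ₛ(K_{m,n}) = min{3m, max{2m, n+1}}. -/

import Mathlib

open Finset

open scoped Classical

/-- The weight of a vertex `v`: the sum of `f` over the edges of `G` incident to `v`. -/
noncomputable def vweight {V : Type*} [Fintype V] [DecidableEq V]
    (G : SimpleGraph V) (f : Sym2 V → ℤ) (v : V) : ℤ :=
  ∑ e ∈ G.incidenceFinset v, f e

/-- `f` is a signed edge domination function of `G`: it takes values in `{1,-1}` on the
edges and for each edge `e = uv`, `∑_{e' ∈ N[e]} f e' = f(u) + f(v) - f(e) ≥ 1`. -/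
noncomputable def IsSEDF {V : Type*} [Fintype V] [DecidableEq V]
    (G : SimpleGraph V) (f : Sym2 V → ℤ) : Prop :=
  (∀ e ∈ G.edgeFinset, f e = 1 ∨ f e = -1) ∧
  ∀ ⦃u v⦄, G.Adj u v → 1 ≤ vweight G f u + vweight G f v - f s(u, v)

/-- `f ∈ SEDF⁰(G)`: `f` takes values in `{1,-1}` on the edges, every vertex has
nonnegative weight, and both endpoints of any positive edge have weights summing to ≥ 2. -/
noncomputable def IsSEDF0 {V : Type*} [Fintype V] [DecidableEq V]
    (G : SimpleGraph V) (f : Sym2 V → ℤ) : Prop :=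
  (∀ e ∈ G.edgeFinset, f e = 1 ∨ f e = -1) ∧
  (∀ v, 0 ≤ vweight G f v) ∧
  ∀ ⦃u v⦄, G.Adj u v → f s(u, v) = 1 → 2 ≤ vweight G f u + vweight G f v

variable {m n : ℕ}

abbrev KG (m n : ℕ) : SimpleGraph (Fin m ⊕ Fin n) := completeBipartiteGraph (Fin m) (Fin n)

lemma KG_adj (i : Fin m) (j : Fin n) : (KG m n).Adj (Sum.inl i) (Sum.inr j) := by simp

lemma mem_edgeFinset_KG (e : Sym2 (Fin m ⊕ Fin n)) :
    e ∈ (KG m n).edgeFinset ↔ ∃ i j, e = s(Sum.inl i, Sum.inr j) := by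
  refine ⟨fun he => ?_, fun ⟨i, j, he⟩ => by subst he; simp [SimpleGraph.mem_edgeFinset]⟩
  rw [SimpleGraph.mem_edgeFinset] at he
  induction e with
  | h u v =>
    rcases u with i | j <;> rcases v with i' | j'
    · simp [SimpleGraph.mem_edgeSet] at he
    · exact ⟨i, j', rfl⟩
    · exact ⟨i', j, Sym2.eq_swap⟩
    · simp [SimpleGraph.mem_edgeSet] at he

lemma incidence_inl (i : Fin m) :
    (KG m n).incidenceFinset (Sum.inl i) = Finset.univ.image (fun j : Fin n => s(Sum.inl i, Sum.inr j)) := by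
  ext e
  simp only [SimpleGraph.mem_incidenceFinset, SimpleGraph.incidenceSet, Set.mem_setOf_eq,
    Finset.mem_image, Finset.mem_univ, true_and, Set.mem_sep_iff]
  constructor
  · rintro ⟨he, hv⟩
    induction e with
    | h u v =>
      rcases u with a | b <;> rcases v with a' | b'
      · simp [SimpleGraph.mem_edgeSet] at he
      · simp only [Sym2.mem_iff] at hv
        have : a = i := by rcases hv with h | h <;> simp_all
        exact ⟨b', by rw [this]⟩
      · simp only [Sym2.mem_iff] at hv
        have : a' = i := by rcases hv with h | h <;> simp_all
        exact ⟨b, by rw [this, Sym2.eq_swap]⟩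
      · simp [SimpleGraph.mem_edgeSet] at he
  · rintro ⟨j, rfl⟩
    exact ⟨by simp [SimpleGraph.mem_edgeSet], by simp⟩

lemma incidence_inr (j : Fin n) :
    (KG m n).incidenceFinset (Sum.inr j) = Finset.univ.image (fun i : Fin m => s(Sum.inl i, Sum.inr j)) := by
  ext e
  simp only [SimpleGraph.mem_incidenceFinset, SimpleGraph.incidenceSet, Set.mem_setOf_eq,
    Finset.mem_image, Finset.mem_univ, true_and, Set.mem_sep_iff]
  constructor
  · rintro ⟨he, hv⟩
    induction e with
    | h u v =>
      rcases u with a | b <;> rcases v with a' | b'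
      · simp [SimpleGraph.mem_edgeSet] at he
      · simp only [Sym2.mem_iff] at hv
        have : b' = j := by rcases hv with h | h <;> simp_all
        exact ⟨a, by rw [this]⟩
      · simp only [Sym2.mem_iff] at hv
        have : b = j := by rcases hv with h | h <;> simp_all
        exact ⟨a', by rw [this, Sym2.eq_swap]⟩
      · simp [SimpleGraph.mem_edgeSet] at he
  · rintro ⟨i, rfl⟩
    exact ⟨by simp [SimpleGraph.mem_edgeSet], by simp⟩

lemma vweight_inl (f : Sym2 (Fin m ⊕ Fin n) → ℤ) (i : Fin m) :
    vweight (KG m n) f (Sum.inl i) = ∑ j : Fin n, f s(Sum.inl i, Sum.inr j) := by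
  rw [vweight, incidence_inl, Finset.sum_image]
  intro a _ b _ h
  simpa using Sym2.congr_right.mp h

lemma vweight_inr (f : Sym2 (Fin m ⊕ Fin n) → ℤ) (j : Fin n) :
    vweight (KG m n) f (Sum.inr j) = ∑ i : Fin m, f s(Sum.inl i, Sum.inr j) := by
  rw [vweight, incidence_inr, Finset.sum_image]
  intro a _ b _ h
  have := Sym2.congr_left.mp h
  simpa using this

lemma edgeFinset_KG :
    (KG m n).edgeFinset =
      Finset.univ.image (fun ij : Fin m × Fin n => s(Sum.inl ij.1, Sum.inr ij.2)) := by
  ext e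
  simp only [mem_edgeFinset_KG, Finset.mem_image, Finset.mem_univ, true_and, Prod.exists]
  tauto

lemma sum_edgeFinset_KG (f : Sym2 (Fin m ⊕ Fin n) → ℤ) :
    ∑ e ∈ (KG m n).edgeFinset, f e = ∑ i : Fin m, ∑ j : Fin n, f s(Sum.inl i, Sum.inr j) := by
  rw [edgeFinset_KG, Finset.sum_image, ← Finset.sum_product']
  · rfl
  · rintro ⟨a, b⟩ _ ⟨c, d⟩ _ h
    simp only [Sym2.eq, Sym2.rel_iff', Prod.mk.injEq, Sum.inl.injEq, Sum.inr.injEq] at h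
    aesop

-- sum of ±1 values
lemma sum_pm {α : Type*} (s : Finset α) (g : α → ℤ) (h : ∀ x ∈ s, g x = 1 ∨ g x = -1) :
    ∑ x ∈ s, g x = 2 * ({x ∈ s | g x = 1}).card - s.card := by
  have : ∀ x ∈ s, g x = 2 * (if g x = 1 then (1:ℤ) else 0) - 1 := by
    intro x hx; rcases h x hx with h1 | h1 <;> simp [h1]
  rw [Finset.sum_congr rfl this, Finset.sum_sub_distrib, ← Finset.mul_sum, Finset.sum_boole,
    Finset.sum_const]
  simp [mul_comm]

-- parity of sum of ±1 values
lemma sum_pm_parity {α : Type*} (s : Finset α) (g : α → ℤ) (h : ∀ x ∈ s, g x = 1 ∨ g x = -1) :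
    (∑ x ∈ s, g x) % 2 = (s.card : ℤ) % 2 := by
  rw [sum_pm s g h]; omega

lemma count_mod_range (k c r : ℕ) (hk : 0 < k) :
    ((Finset.range (c * k)).filter (fun q => q % k = r)).card = if r < k then c else 0 := by
  split_ifs with hr
  · conv_rhs => rw [← Finset.card_range c]
    apply Finset.card_nbij' (i := fun q => q / k) (j := fun i => k * i + r)
    · intro q hq
      simp only [Finset.mem_coe, Finset.mem_filter, Finset.mem_range] at hq ⊢
      exact Nat.div_lt_of_lt_mul (by rw [mul_comm k c]; exact hq.1)
    · intro i hi
      simp only [Finset.mem_coe, Finset.mem_filter, Finset.mem_range] at hi ⊢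
      constructor
      · calc k * i + r < k * i + k := by omega
          _ = k * (i+1) := by ring
          _ ≤ k * c := by exact Nat.mul_le_mul_left k (by omega)
          _ = c * k := by ring
      · rw [Nat.mul_add_mod, Nat.mod_eq_of_lt hr]
    · intro q hq
      simp only [Finset.mem_coe, Finset.mem_filter, Finset.mem_range] at hq
      have := Nat.div_add_mod q k
      dsimp only
      omega
    · intro i hi
      simp only [Finset.mem_coe, Finset.mem_range] at hi
      dsimp only
      rw [Nat.mul_add_div hk, Nat.div_eq_of_lt] <;> omega
  · rw [Finset.card_eq_zero, Finset.filter_eq_empty_iff]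
    intro q _
    have := Nat.mod_lt q hk
    omega

-- at most one t < s0 ≤ k with (c+t) % k = r; count as indicator
lemma count_shift (k c s0 r : ℕ) (hs : s0 ≤ k) :
    ((Finset.range s0).filter (fun t => (c + t) % k = r)).card
      = if ∃ t, t < s0 ∧ (c + t) % k = r then 1 else 0 := by
  rcases Nat.eq_zero_or_pos k with hk | hk
  · subst hk
    have : s0 = 0 := by omega
    subst this
    simp
  split_ifs with he
  · obtain ⟨t, ht, hmod⟩ := he
    rw [Finset.card_eq_one]
    refine ⟨t, ?_⟩
    ext t'
    simp only [Finset.mem_filter, Finset.mem_range, Finset.mem_singleton]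
    constructor
    · rintro ⟨ht', hmod'⟩
      have h1 : (c + t) % k = (c + t') % k := by omega
      have h2 : t % k = t' % k := by
        have := Nat.ModEq.add_left_cancel' c (h1 : (c+t) ≡ (c+t') [MOD k])
        exact this
      rw [Nat.mod_eq_of_lt (by omega), Nat.mod_eq_of_lt (by omega)] at h2
      omega
    · rintro rfl; exact ⟨ht, hmod⟩
  · rw [Finset.card_eq_zero, Finset.filter_eq_empty_iff]
    intro t ht
    simp only [Finset.mem_range] at ht
    exact fun hmod => he ⟨t, ht, hmod⟩

lemma filter_Ico_card (c s0 : ℕ) (P : ℕ → Prop) [DecidablePred P] :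
    ((Finset.Ico c (c + s0)).filter P).card = ((Finset.range s0).filter (fun t => P (c + t))).card := by
  apply Finset.card_nbij' (i := fun q => q - c) (j := fun t => c + t)
  · intro q hq
    simp only [Finset.mem_coe, Finset.mem_filter, Finset.mem_Ico, Finset.mem_range] at hq ⊢
    refine ⟨by omega, ?_⟩
    have : c + (q - c) = q := by omega
    rw [this]; exact hq.2
  · intro t ht
    simp only [Finset.mem_coe, Finset.mem_filter, Finset.mem_Ico, Finset.mem_range] at ht ⊢
    exact ⟨by omega, ht.2⟩
  · intro q hq
    simp only [Finset.mem_coe, Finset.mem_filter, Finset.mem_Ico] at hq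
    dsimp only
    omega
  · intro t _
    dsimp only
    omega

lemma count_cum (k : ℕ) (s : ℕ → ℕ) (hs : ∀ j, s j ≤ k) (r N : ℕ) :
    ((Finset.range N).filter
        (fun j => ∃ t, t < s j ∧ ((∑ j' ∈ Finset.range j, s j') + t) % k = r)).card
      = ((Finset.range (∑ j' ∈ Finset.range N, s j')).filter (fun q => q % k = r)).card := by
  induction N with
  | zero => simp
  | succ N ih =>
    rw [Finset.sum_range_succ, Finset.range_add_one, Finset.filter_insert]
    have hsplit : Finset.range ((∑ j' ∈ Finset.range N, s j') + s N)
        = Finset.range (∑ j' ∈ Finset.range N, s j')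
          ∪ Finset.Ico (∑ j' ∈ Finset.range N, s j') ((∑ j' ∈ Finset.range N, s j') + s N) := by
      simp only [Finset.range_eq_Ico]
      rw [Finset.Ico_union_Ico_eq_Ico] <;> omega
    rw [hsplit, Finset.filter_union, Finset.card_union_of_disjoint, ← ih]
    · rw [filter_Ico_card, count_shift k _ _ _ (hs N)]
      split_ifs with he
      · rw [Finset.card_insert_of_notMem (by simp)]
      · simp
    · apply Finset.disjoint_filter_filter
      rw [Finset.range_eq_Ico]
      exact Finset.Ico_disjoint_Ico_consecutive 0 _ _

lemma count_image (k c s0 : ℕ) (hk : 0 < k) (hs : s0 ≤ k) :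
    ((Finset.range k).filter (fun r => ∃ t, t < s0 ∧ (c + t) % k = r)).card = s0 := by
  have himg : (Finset.range k).filter (fun r => ∃ t, t < s0 ∧ (c + t) % k = r)
      = (Finset.range s0).image (fun t => (c + t) % k) := by
    ext r
    simp only [Finset.mem_filter, Finset.mem_range, Finset.mem_image]
    constructor
    · rintro ⟨_, t, ht, rfl⟩; exact ⟨t, ht, rfl⟩
    · rintro ⟨t, ht, rfl⟩; exact ⟨Nat.mod_lt _ hk, t, ht, rfl⟩
  rw [himg, Finset.card_image_of_injOn, Finset.card_range]
  intro t1 h1 t2 h2 heq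
  simp only [Finset.coe_range, Set.mem_Iio] at h1 h2
  have hme := Nat.ModEq.add_left_cancel' c (heq : (c+t1) ≡ (c+t2) [MOD k])
  have e1 : t1 % k = t1 := Nat.mod_eq_of_lt (by omega)
  have e2 : t2 % k = t2 := Nat.mod_eq_of_lt (by omega)
  unfold Nat.ModEq at hme
  omega

set_option linter.unusedSectionVars false

namespace SEDFC

variable (h n' : ℕ)

def p : ℕ := min (n' + 1) (3 * h)
def d : ℕ := 2 * h - (n' + 1)
def l : ℕ := min h (3 * h - (n' + 1))
def k : ℕ := 2 * h - l h n'
def sz : ℕ → ℕ := fun j =>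
  if j < d h n' then h + 2 - l h n' else if j < p h n' then h + 1 - l h n' else h
def cum : ℕ → ℕ := fun j => ∑ j' ∈ Finset.range j, sz h n' j'
def M : ℕ → ℕ → Prop := fun i j =>
  if i < l h n' then j < p h n'
  else ∃ t, t < sz h n' j ∧ (cum h n' j + t) % (k h n') = i - l h n'

variable (hh : 1 ≤ h) (hhn : h ≤ n')

include hh hhn

lemma l_le : l h n' ≤ h := by unfold l; omega

lemma k_ge : h ≤ k h n' := by unfold k l; omega

lemma k_pos : 0 < k h n' := by have := k_ge h n' hh hhn; omega

lemma d_pos_h2 : 0 < d h n' → 2 ≤ h := by unfold d; omega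

lemma sz_le_k : ∀ j, sz h n' j ≤ k h n' := by
  intro j
  have h2 := d_pos_h2 h n' hh hhn
  unfold sz k l d at *
  split_ifs <;> omega

lemma d_le_p : d h n' ≤ p h n' := by unfold d p; omega

lemma p_le_n : p h n' ≤ 2 * n' + 1 := by unfold p; omega

lemma l_pos_p : 0 < l h n' → p h n' = n' + 1 := by unfold l p; omega

lemma cum_pieces : cum h n' (2 * n' + 1)
    = d h n' * (h + 2 - l h n') + (p h n' - d h n') * (h + 1 - l h n')
      + (2 * n' + 1 - p h n') * h := by
  have h1 : d h n' ≤ p h n' := d_le_p h n' hh hhn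
  have h2 : p h n' ≤ 2 * n' + 1 := p_le_n h n' hh hhn
  unfold cum
  rw [Finset.range_eq_Ico,
    ← Finset.sum_Ico_consecutive _ (Nat.zero_le (p h n')) h2,
    ← Finset.sum_Ico_consecutive _ (Nat.zero_le (d h n')) h1]
  have e1 : ∑ j ∈ Finset.Ico 0 (d h n'), sz h n' j = d h n' * (h + 2 - l h n') := by
    have hcst : ∀ j ∈ Finset.Ico 0 (d h n'), sz h n' j = h + 2 - l h n' := by
      intro j hj
      simp only [Finset.mem_Ico] at hj
      unfold sz
      rw [if_pos hj.2]
    rw [Finset.sum_congr rfl hcst, Finset.sum_const, Nat.card_Ico, smul_eq_mul, Nat.sub_zero]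
  have e2 : ∑ j ∈ Finset.Ico (d h n') (p h n'), sz h n' j
      = (p h n' - d h n') * (h + 1 - l h n') := by
    have hcst : ∀ j ∈ Finset.Ico (d h n') (p h n'), sz h n' j = h + 1 - l h n' := by
      intro j hj
      simp only [Finset.mem_Ico] at hj
      unfold sz
      rw [if_neg (by omega), if_pos hj.2]
    rw [Finset.sum_congr rfl hcst, Finset.sum_const, Nat.card_Ico, smul_eq_mul]
  have e3 : ∑ j ∈ Finset.Ico (p h n') (2 * n' + 1), sz h n' j
      = (2 * n' + 1 - p h n') * h := by
    have hcst : ∀ j ∈ Finset.Ico (p h n') (2 * n' + 1), sz h n' j = h := by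
      intro j hj
      simp only [Finset.mem_Ico] at hj
      unfold sz
      rw [if_neg (by omega), if_neg (by omega)]
    rw [Finset.sum_congr rfl hcst, Finset.sum_const, Nat.card_Ico, smul_eq_mul]
  rw [e1, e2, e3]

lemma cum_val : cum h n' (2 * n' + 1) = k h n' * (n' + 2) := by
  rw [cum_pieces h n' hh hhn]
  rcases Nat.lt_or_ge (n' + 1) (2 * h) with hc1 | hc1
  · -- case (i): d > 0, l = h, p = n'+1, k = h
    have hl : l h n' = h := by unfold l; omega
    have hp : p h n' = n' + 1 := by unfold p; omega
    have hk : k h n' = h := by unfold k; omega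
    have hd : d h n' = 2 * h - (n' + 1) := rfl
    rw [hl, hp, hk, hd]
    zify [hc1.le, hhn, show n' + 1 ≤ 2 * h by omega, show h ≤ h + 1 by omega,
      show h ≤ h + 2 by omega, show 2 * h - (n' + 1) ≤ n' + 1 by omega,
      show n' + 1 ≤ 2 * n' + 1 by omega]
    ring
  · rcases Nat.lt_or_ge (3 * h) (n' + 1) with hc2 | hc2
    · -- case (iii): l = 0, p = 3h, d = 0
      have hl : l h n' = 0 := by unfold l; omega
      have hp : p h n' = 3 * h := by unfold p; omega
      have hk : k h n' = 2 * h := by unfold k; rw [hl]; omega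
      have hd : d h n' = 0 := by unfold d; omega
      rw [hl, hp, hk, hd]
      simp only [Nat.sub_zero]
      zify [show 3 * h ≤ 2 * n' + 1 by omega]
      ring
    · -- case (ii): 2h ≤ n'+1 ≤ 3h: l = 3h-(n'+1), p = n'+1, d = 0
      have hl : l h n' = 3 * h - (n' + 1) := by unfold l; omega
      have hp : p h n' = n' + 1 := by unfold p; omega
      have hk : k h n' = 2 * h - (3 * h - (n' + 1)) := by unfold k; rw [hl]
      have hd : d h n' = 0 := by unfold d; omega
      rw [hl, hp, hk, hd]
      simp only [Nat.sub_zero]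
      zify [hc2, hc1, show 3 * h - (n' + 1) ≤ h + 1 by omega,
        show 3 * h - (n' + 1) ≤ h + 2 by omega, show 3 * h - (n' + 1) ≤ 2 * h by omega,
        show n' + 1 ≤ 2 * n' + 1 by omega]
      ring

lemma lk : l h n' + k h n' = 2 * h := by
  have := l_le h n' hh hhn
  unfold k
  omega

lemma colcount (j : ℕ) :
    ((Finset.range (2 * h)).filter (fun i => M h n' i j)).card
      = (if j < p h n' then l h n' else 0) + sz h n' j := by
  have hlk := lk h n' hh hhn
  have hkpos := k_pos h n' hh hhn
  have hsz := sz_le_k h n' hh hhn j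
  have hsplit : Finset.range (2 * h)
      = Finset.Ico 0 (l h n') ∪ Finset.Ico (l h n') (2 * h) := by
    rw [Finset.range_eq_Ico, Finset.Ico_union_Ico_eq_Ico] <;> omega
  rw [hsplit, Finset.filter_union, Finset.card_union_of_disjoint
    (Finset.disjoint_filter_filter (Finset.Ico_disjoint_Ico_consecutive 0 _ _))]
  congr 1
  · -- light part
    have hcong : Finset.filter (fun i => M h n' i j) (Finset.Ico 0 (l h n'))
        = Finset.filter (fun _ => j < p h n') (Finset.Ico 0 (l h n')) := by
      apply Finset.filter_congr
      intro i hi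
      simp only [Finset.mem_Ico] at hi
      unfold M
      rw [if_pos hi.2]
    rw [hcong]
    split_ifs with hjp
    · rw [Finset.filter_true_of_mem (fun _ _ => hjp), Nat.card_Ico, Nat.sub_zero]
    · rw [Finset.filter_false_of_mem (fun _ _ => hjp), Finset.card_empty]
  · -- heavy part
    rw [← count_image (k h n') (cum h n' j) (sz h n' j) hkpos hsz]
    apply Finset.card_nbij' (i := fun i => i - l h n') (j := fun r => l h n' + r)
    · intro i hi
      simp only [Finset.mem_coe, Finset.mem_filter, Finset.mem_Ico, Finset.mem_range] at hi ⊢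
      obtain ⟨⟨hi1, hi2⟩, hM⟩ := hi
      unfold M at hM
      rw [if_neg (by omega)] at hM
      exact ⟨by omega, hM⟩
    · intro r hr
      simp only [Finset.mem_coe, Finset.mem_filter, Finset.mem_Ico, Finset.mem_range] at hr ⊢
      refine ⟨⟨by omega, by omega⟩, ?_⟩
      unfold M
      rw [if_neg (by omega)]
      simpa using hr.2
    · intro i hi
      simp only [Finset.mem_coe, Finset.mem_filter, Finset.mem_Ico] at hi
      dsimp only
      omega
    · intro r _
      dsimp only
      omega

lemma rowcount_light (i : ℕ) (hi : i < l h n') :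
    ((Finset.range (2 * n' + 1)).filter (fun j => M h n' i j)).card = p h n' := by
  have hpn := p_le_n h n' hh hhn
  have hcong : Finset.filter (fun j => M h n' i j) (Finset.range (2 * n' + 1))
      = Finset.filter (fun j => j < p h n') (Finset.range (2 * n' + 1)) := by
    apply Finset.filter_congr
    intro j _
    unfold M
    rw [if_pos hi]
  rw [hcong]
  have : Finset.filter (fun j => j < p h n') (Finset.range (2 * n' + 1))
      = Finset.range (p h n') := by
    ext j
    simp only [Finset.mem_filter, Finset.mem_range]
    omega
  rw [this, Finset.card_range]

lemma rowcount_heavy (i : ℕ) (hi1 : l h n' ≤ i) (hi2 : i < 2 * h) :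
    ((Finset.range (2 * n' + 1)).filter (fun j => M h n' i j)).card = n' + 2 := by
  have hlk := lk h n' hh hhn
  have hkpos := k_pos h n' hh hhn
  have hcong : Finset.filter (fun j => M h n' i j) (Finset.range (2 * n' + 1))
      = Finset.filter
          (fun j => ∃ t, t < sz h n' j ∧ ((∑ j' ∈ Finset.range j, sz h n' j') + t) % (k h n') = i - l h n')
          (Finset.range (2 * n' + 1)) := by
    apply Finset.filter_congr
    intro j _
    unfold M cum
    rw [if_neg (by omega)]
  rw [hcong, count_cum (k h n') (sz h n') (sz_le_k h n' hh hhn) (i - l h n') (2 * n' + 1)]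
  have hcv : ∑ j' ∈ Finset.range (2 * n' + 1), sz h n' j' = k h n' * (n' + 2) := by
    have := cum_val h n' hh hhn
    unfold cum at this
    exact this
  rw [hcv, mul_comm, count_mod_range _ _ _ hkpos, if_pos (by omega)]

lemma colcount_lb (j : ℕ) :
    (if j < p h n' then h + 1 else h) ≤ (if j < p h n' then l h n' else 0) + sz h n' j := by
  unfold sz p l d
  split_ifs <;> omega

lemma sz_after_p (j : ℕ) (hj : p h n' ≤ j) : sz h n' j = h := by
  have := d_le_p h n' hh hhn
  unfold sz
  rw [if_neg (by omega), if_neg (by omega)]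

end SEDFC

lemma sum_ite_pm (N : ℕ) (P : ℕ → Prop) :
    ∑ j : Fin N, (if P j.1 then (1:ℤ) else -1)
      = 2 * (((Finset.range N).filter P).card : ℤ) - N := by
  rw [Fin.sum_univ_eq_sum_range (fun j => if P j then (1:ℤ) else -1)]
  rw [sum_pm _ _ (fun x _ => by split <;> simp)]
  simp

noncomputable def efun (m n : ℕ) (P : ℕ → ℕ → Prop) : (Fin m ⊕ Fin n) → (Fin m ⊕ Fin n) → ℤ :=
  fun x y => match x, y with
  | Sum.inl i, Sum.inr j => if P i.1 j.1 then 1 else -1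
  | Sum.inr j, Sum.inl i => if P i.1 j.1 then 1 else -1
  | _, _ => 1

lemma efun_symm (m n : ℕ) (P : ℕ → ℕ → Prop) :
    ∀ x y, efun m n P x y = efun m n P y x := by
  rintro (i | j) (i' | j') <;> rfl

noncomputable def fsym2 (m n : ℕ) (P : ℕ → ℕ → Prop) : Sym2 (Fin m ⊕ Fin n) → ℤ :=
  Sym2.lift ⟨efun m n P, efun_symm m n P⟩

lemma fsym2_mk (m n : ℕ) (P : ℕ → ℕ → Prop) (i : Fin m) (j : Fin n) :
    fsym2 m n P s(Sum.inl i, Sum.inr j) = if P i.1 j.1 then 1 else -1 := by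
  rfl

theorem upper (m n h n' : ℕ) (hh : 1 ≤ h) (hhn : h ≤ n')
    (hm2 : m = 2 * h) (hn2 : n = 2 * n' + 1) :
    ∃ f : Sym2 (Fin m ⊕ Fin n) → ℤ,
      IsSEDF (KG m n) f ∧
        ∑ e ∈ (KG m n).edgeFinset, f e
          = min (3 * (m : ℤ)) (max (2 * (m : ℤ)) ((n : ℤ) + 1)) := by
  subst hm2 hn2
  set F := fsym2 (2 * h) (2 * n' + 1) (SEDFC.M h n') with hF
  have hg : ∀ (i : Fin (2 * h)) (j : Fin (2 * n' + 1)),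
      F s(Sum.inl i, Sum.inr j) = if SEDFC.M h n' i.1 j.1 then (1 : ℤ) else -1 :=
    fun i j => fsym2_mk _ _ _ i j
  have inner : ∀ i : Fin (2 * h),
      ∑ j : Fin (2 * n' + 1), F s(Sum.inl i, Sum.inr j)
        = 2 * (((Finset.range (2 * n' + 1)).filter (fun j => SEDFC.M h n' i.1 j)).card : ℤ)
            - ((2 * n' + 1 : ℕ) : ℤ) := by
    intro i
    rw [Finset.sum_congr rfl (fun j _ => hg i j), sum_ite_pm]
  have hvl : ∀ i : Fin (2 * h),
      vweight (KG (2 * h) (2 * n' + 1)) F (Sum.inl i)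
        = 2 * (((Finset.range (2 * n' + 1)).filter (fun j => SEDFC.M h n' i.1 j)).card : ℤ)
            - ((2 * n' + 1 : ℕ) : ℤ) := by
    intro i
    rw [vweight_inl]
    exact inner i
  have hvr : ∀ j : Fin (2 * n' + 1),
      vweight (KG (2 * h) (2 * n' + 1)) F (Sum.inr j)
        = 2 * (((Finset.range (2 * h)).filter (fun i => SEDFC.M h n' i j.1)).card : ℤ)
            - ((2 * h : ℕ) : ℤ) := by
    intro j
    rw [vweight_inr]
    have hg' : ∀ i : Fin (2 * h), F s(Sum.inl i, Sum.inr j)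
        = if SEDFC.M h n' i.1 j.1 then (1 : ℤ) else -1 := fun i => hg i j
    rw [Finset.sum_congr rfl (fun i _ => hg' i),
      sum_ite_pm (2 * h) (fun i => SEDFC.M h n' i j.1)]
  have hrowlight : ∀ i : Fin (2 * h), i.1 < SEDFC.l h n' →
      vweight (KG (2 * h) (2 * n' + 1)) F (Sum.inl i) = 1 := by
    intro i hi
    rw [hvl i, SEDFC.rowcount_light h n' hh hhn i.1 hi,
      SEDFC.l_pos_p h n' hh hhn (by omega)]
    push_cast
    ring
  have hrowheavy : ∀ i : Fin (2 * h), SEDFC.l h n' ≤ i.1 →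
      vweight (KG (2 * h) (2 * n' + 1)) F (Sum.inl i) = 3 := by
    intro i hi
    rw [hvl i, SEDFC.rowcount_heavy h n' hh hhn i.1 hi i.isLt]
    push_cast
    ring
  have hcol2 : ∀ j : Fin (2 * n' + 1), j.1 < SEDFC.p h n' →
      (2 : ℤ) ≤ vweight (KG (2 * h) (2 * n' + 1)) F (Sum.inr j) := by
    intro j hj
    rw [hvr j, SEDFC.colcount h n' hh hhn j.1, if_pos hj]
    have lb := SEDFC.colcount_lb h n' hh hhn j.1
    rw [if_pos hj, if_pos hj] at lb
    omega
  have hcol0 : ∀ j : Fin (2 * n' + 1),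
      (0 : ℤ) ≤ vweight (KG (2 * h) (2 * n' + 1)) F (Sum.inr j) := by
    intro j
    rw [hvr j, SEDFC.colcount h n' hh hhn j.1]
    have lb := SEDFC.colcount_lb h n' hh hhn j.1
    split_ifs at lb ⊢ <;> omega
  have hcolY : ∀ j : Fin (2 * n' + 1), SEDFC.p h n' ≤ j.1 →
      vweight (KG (2 * h) (2 * n' + 1)) F (Sum.inr j) = 0 := by
    intro j hj
    rw [hvr j, SEDFC.colcount h n' hh hhn j.1, if_neg (by omega),
      SEDFC.sz_after_p h n' hh hhn j.1 hj]
    push_cast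
    ring
  have main : ∀ (i : Fin (2 * h)) (j : Fin (2 * n' + 1)),
      1 ≤ vweight (KG (2 * h) (2 * n' + 1)) F (Sum.inl i)
          + vweight (KG (2 * h) (2 * n' + 1)) F (Sum.inr j)
          - F s(Sum.inl i, Sum.inr j) := by
    intro i j
    rcases Nat.lt_or_ge i.1 (SEDFC.l h n') with hi | hi
    · rcases Nat.lt_or_ge j.1 (SEDFC.p h n') with hj | hj
      · have hb := hcol2 j hj
        rw [hrowlight i hi, hg i j]
        split_ifs <;> omega
      · have hgneg : F s(Sum.inl i, Sum.inr j) = -1 := by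
          rw [hg i j, if_neg]
          unfold SEDFC.M
          rw [if_pos hi]
          omega
        rw [hrowlight i hi, hcolY j hj, hgneg]
        norm_num
    · have hb := hcol0 j
      rw [hrowheavy i hi, hg i j]
      split_ifs <;> omega
  refine ⟨F, ⟨?_, ?_⟩, ?_⟩
  · intro e he
    rw [mem_edgeFinset_KG] at he
    obtain ⟨i, j, rfl⟩ := he
    rw [hg i j]
    split_ifs <;> simp
  · intro u v huv
    rcases u with i | j <;> rcases v with i' | j'
    · simp at huv
    · exact main i j'
    · have hm := main i' j
      rw [Sym2.eq_swap]
      linarith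
    · simp at huv
  · rw [sum_edgeFinset_KG, Finset.sum_congr rfl (fun i _ => inner i),
      Fin.sum_univ_eq_sum_range (fun i =>
        2 * (((Finset.range (2 * n' + 1)).filter (fun j => SEDFC.M h n' i j)).card : ℤ)
          - ((2 * n' + 1 : ℕ) : ℤ))]
    have hl2h : SEDFC.l h n' ≤ 2 * h := le_trans (SEDFC.l_le h n' hh hhn) (by omega)
    rw [show Finset.range (2 * h) = Finset.Ico 0 (2 * h) from by rw [Finset.range_eq_Ico],
      ← Finset.sum_Ico_consecutive _ (Nat.zero_le (SEDFC.l h n')) hl2h]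
    have elight : ∑ i ∈ Finset.Ico 0 (SEDFC.l h n'),
        (2 * (((Finset.range (2 * n' + 1)).filter (fun j => SEDFC.M h n' i j)).card : ℤ)
          - ((2 * n' + 1 : ℕ) : ℤ))
        = (SEDFC.l h n' : ℤ) * (2 * (SEDFC.p h n' : ℤ) - ((2 * n' + 1 : ℕ) : ℤ)) := by
      have hcst : ∀ i ∈ Finset.Ico 0 (SEDFC.l h n'),
          (2 * (((Finset.range (2 * n' + 1)).filter (fun j => SEDFC.M h n' i j)).card : ℤ)
            - ((2 * n' + 1 : ℕ) : ℤ))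
          = 2 * (SEDFC.p h n' : ℤ) - ((2 * n' + 1 : ℕ) : ℤ) := by
        intro i hi
        simp only [Finset.mem_Ico] at hi
        rw [SEDFC.rowcount_light h n' hh hhn i hi.2]
      rw [Finset.sum_congr rfl hcst, Finset.sum_const, Nat.card_Ico, Nat.sub_zero,
        nsmul_eq_mul]
    have eheavy : ∑ i ∈ Finset.Ico (SEDFC.l h n') (2 * h),
        (2 * (((Finset.range (2 * n' + 1)).filter (fun j => SEDFC.M h n' i j)).card : ℤ)
          - ((2 * n' + 1 : ℕ) : ℤ))
        = ((2 * h - SEDFC.l h n' : ℕ) : ℤ) * 3 := by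
      have hcst : ∀ i ∈ Finset.Ico (SEDFC.l h n') (2 * h),
          (2 * (((Finset.range (2 * n' + 1)).filter (fun j => SEDFC.M h n' i j)).card : ℤ)
            - ((2 * n' + 1 : ℕ) : ℤ))
          = 3 := by
        intro i hi
        simp only [Finset.mem_Ico] at hi
        rw [SEDFC.rowcount_heavy h n' hh hhn i hi.1 hi.2]
        push_cast
        ring
      rw [Finset.sum_congr rfl hcst, Finset.sum_const, Nat.card_Ico, nsmul_eq_mul]
    rw [elight, eheavy]
    rcases Nat.lt_or_ge (n' + 1) (2 * h) with hc1 | hc1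
    · have hl : SEDFC.l h n' = h := by unfold SEDFC.l; omega
      have hp : SEDFC.p h n' = n' + 1 := by unfold SEDFC.p; omega
      rw [hl, hp, Nat.cast_sub (by omega)]
      push_cast
      ring_nf
      omega
    · rcases Nat.lt_or_ge (3 * h) (n' + 1) with hc2 | hc2
      · have hl : SEDFC.l h n' = 0 := by unfold SEDFC.l; omega
        rw [hl, Nat.cast_sub (by omega)]
        push_cast
        ring_nf
        omega
      · have hl : SEDFC.l h n' = 3 * h - (n' + 1) := by unfold SEDFC.l; omega
        have hp : SEDFC.p h n' = n' + 1 := by unfold SEDFC.p; omega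
        rw [hl, hp, Nat.cast_sub (by omega), Nat.cast_sub (by omega),
          Nat.cast_sub (by omega)]
        push_cast
        ring_nf
        omega

theorem lower (m n : ℕ) (hm0 : 0 < m) (hmn : m ≤ n) (hm : Even m) (hn : Odd n)
    (f : Sym2 (Fin m ⊕ Fin n) → ℤ) (hf : IsSEDF (KG m n) f) :
    min (3 * (m : ℤ)) (max (2 * (m : ℤ)) ((n : ℤ) + 1))
      ≤ ∑ e ∈ (KG m n).edgeFinset, f e := by
  obtain ⟨hpm', hcond'⟩ := hf
  set g : Fin m → Fin n → ℤ := fun i j => f s(Sum.inl i, Sum.inr j) with hgdef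
  have hpm : ∀ i j, g i j = 1 ∨ g i j = -1 := by
    intro i j
    exact hpm' _ ((mem_edgeFinset_KG _).mpr ⟨i, j, rfl⟩)
  set A : Fin m → ℤ := fun i => ∑ j, g i j with hAdef
  set B : Fin n → ℤ := fun j => ∑ i, g i j with hBdef
  have hcond : ∀ i j, 1 ≤ A i + B j - g i j := by
    intro i j
    have := hcond' (KG_adj i j)
    rwa [vweight_inl, vweight_inr] at this
  have hn1 : 1 ≤ n := le_trans hm0 hmn
  have hAodd : ∀ i, A i % 2 = 1 := by
    intro i
    have := sum_pm_parity Finset.univ (fun j => g i j) (fun j _ => hpm i j)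
    simp only [Finset.card_univ, Fintype.card_fin] at this
    rw [hAdef]
    obtain ⟨n2, rfl⟩ := hn
    push_cast at this ⊢
    omega
  have hBeven : ∀ j, B j % 2 = 0 := by
    intro j
    have := sum_pm_parity Finset.univ (fun i => g i j) (fun i _ => hpm i j)
    simp only [Finset.card_univ, Fintype.card_fin] at this
    rw [hBdef]
    obtain ⟨m2, rfl⟩ := hm
    push_cast at this ⊢
    omega
  have hSrow : ∑ e ∈ (KG m n).edgeFinset, f e = ∑ i, A i := by
    rw [sum_edgeFinset_KG]
  have hScol : ∑ e ∈ (KG m n).edgeFinset, f e = ∑ j, B j := by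
    rw [sum_edgeFinset_KG]
    exact Finset.sum_comm
  have hAB0 : ∀ i j, 0 ≤ A i + B j := by
    intro i j
    have h1 := hcond i j
    rcases hpm i j with h2 | h2 <;> omega
  have hAB2 : ∀ i j, g i j = 1 → 2 ≤ A i + B j := by
    intro i j hg1
    have h1 := hcond i j
    omega
  -- a helper: if all B j ≥ 2 then done
  have hcase2n : (∀ j, 2 ≤ B j) → min (3 * (m : ℤ)) (max (2 * (m : ℤ)) ((n : ℤ) + 1))
      ≤ ∑ e ∈ (KG m n).edgeFinset, f e := by
    intro hB2
    have hS : 2 * (n : ℤ) ≤ ∑ e ∈ (KG m n).edgeFinset, f e := by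
      rw [hScol]
      calc 2 * (n : ℤ) = ∑ _j : Fin n, (2 : ℤ) := by
            rw [Finset.sum_const, Finset.card_univ, Fintype.card_fin, nsmul_eq_mul]; ring
        _ ≤ ∑ j, B j := Finset.sum_le_sum (fun j _ => hB2 j)
    have hmn' : (m : ℤ) ≤ (n : ℤ) := by exact_mod_cast hmn
    have hn1' : (1 : ℤ) ≤ (n : ℤ) := by exact_mod_cast hn1
    omega
  by_cases hall3 : ∀ i, 3 ≤ A i
  · have hS : 3 * (m : ℤ) ≤ ∑ e ∈ (KG m n).edgeFinset, f e := by
      rw [hSrow]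
      calc 3 * (m : ℤ) = ∑ _i : Fin m, (3 : ℤ) := by
            rw [Finset.sum_const, Finset.card_univ, Fintype.card_fin, nsmul_eq_mul]; ring
        _ ≤ ∑ i, A i := Finset.sum_le_sum (fun i _ => hall3 i)
    omega
  · push_neg at hall3
    obtain ⟨i₀, hi₀⟩ := hall3
    rcases le_or_gt (A i₀) (-1) with hneg | hpos
    · -- all B j ≥ 2
      apply hcase2n
      intro j
      have h1 := hAB0 i₀ j
      have h2 := hBeven j
      omega
    · have hA1 : A i₀ = 1 := by have := hAodd i₀; omega
      have hB0 : ∀ j, 0 ≤ B j := by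
        intro j
        have h1 := hAB0 i₀ j
        have h2 := hBeven j
        omega
      have hBpos2 : ∀ j, g i₀ j = 1 → 2 ≤ B j := by
        intro j hg1
        have h1 := hAB2 i₀ j hg1
        have h2 := hBeven j
        omega
      -- count positive edges at i₀
      set P : Finset (Fin n) := Finset.univ.filter (fun j => g i₀ j = 1) with hPdef
      have hPcard : 2 * (P.card : ℤ) = (n : ℤ) + 1 := by
        have hsum := sum_pm Finset.univ (fun j => g i₀ j) (fun j _ => hpm i₀ j)
        simp only [Finset.card_univ, Fintype.card_fin] at hsum
        have hA1'' : ∑ j, g i₀ j = 1 := hA1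
        rw [hA1'', ← hPdef] at hsum
        omega
      have hSn1 : (n : ℤ) + 1 ≤ ∑ e ∈ (KG m n).edgeFinset, f e := by
        rw [hScol, ← Finset.sum_filter_add_sum_filter_not Finset.univ (fun j => g i₀ j = 1),
          ← hPdef]
        have e1 : 2 * (P.card : ℤ) ≤ ∑ j ∈ P, B j := by
          calc 2 * (P.card : ℤ) = ∑ _j ∈ P, (2 : ℤ) := by
                rw [Finset.sum_const, nsmul_eq_mul]; ring
            _ ≤ ∑ j ∈ P, B j := Finset.sum_le_sum
                (fun j hj => hBpos2 j (by simpa [hPdef] using hj))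
        have e2 : (0 : ℤ) ≤ ∑ j ∈ Finset.univ.filter (fun j => ¬ g i₀ j = 1), B j :=
          Finset.sum_nonneg (fun j _ => hB0 j)
        omega
      by_cases hex0 : ∃ j₀, B j₀ ≤ 0
      · obtain ⟨j₀, hj₀⟩ := hex0
        have hBj0 : B j₀ = 0 := le_antisymm hj₀ (hB0 j₀)
        have hA1' : ∀ i, 1 ≤ A i := by
          intro i
          have h1 := hAB0 i j₀
          have h2 := hAodd i
          omega
        have hA3 : ∀ i, g i j₀ = 1 → 3 ≤ A i := by
          intro i hg1
          have h1 := hAB2 i j₀ hg1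
          have h2 := hAodd i
          omega
        set Q : Finset (Fin m) := Finset.univ.filter (fun i => g i j₀ = 1) with hQdef
        have hQcard : 2 * (Q.card : ℤ) = (m : ℤ) := by
          have hsum := sum_pm Finset.univ (fun i => g i j₀) (fun i _ => hpm i j₀)
          simp only [Finset.card_univ, Fintype.card_fin] at hsum
          have hB'' : ∑ i, g i j₀ = 0 := hBj0
          rw [hB'', ← hQdef] at hsum
          omega
        have hS2m : 2 * (m : ℤ) ≤ ∑ e ∈ (KG m n).edgeFinset, f e := by
          rw [hSrow, ← Finset.sum_filter_add_sum_filter_not Finset.univ (fun i => g i j₀ = 1),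
            ← hQdef]
          have e1 : 3 * (Q.card : ℤ) ≤ ∑ i ∈ Q, A i := by
            calc 3 * (Q.card : ℤ) = ∑ _i ∈ Q, (3 : ℤ) := by
                  rw [Finset.sum_const, nsmul_eq_mul]; ring
              _ ≤ ∑ i ∈ Q, A i := Finset.sum_le_sum
                  (fun i hi => hA3 i (by simpa [hQdef] using hi))
          have e2 : ((Finset.univ.filter (fun i => ¬ g i j₀ = 1)).card : ℤ)
              ≤ ∑ i ∈ Finset.univ.filter (fun i => ¬ g i j₀ = 1), A i := by
            calc ((Finset.univ.filter (fun i => ¬ g i j₀ = 1)).card : ℤ)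
                = ∑ _i ∈ Finset.univ.filter (fun i => ¬ g i j₀ = 1), (1 : ℤ) := by
                  rw [Finset.sum_const, nsmul_eq_mul]; ring
              _ ≤ _ := Finset.sum_le_sum (fun i _ => hA1' i)
          have e3 : Q.card + (Finset.univ.filter (fun i => ¬ g i j₀ = 1)).card = m := by
            rw [hQdef, Finset.card_filter_add_card_filter_not,
              Finset.card_univ, Fintype.card_fin]
          have e3' : (Q.card : ℤ) + ((Finset.univ.filter (fun i => ¬ g i j₀ = 1)).card : ℤ)
              = (m : ℤ) := by exact_mod_cast e3
          omega
        omega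
      · push_neg at hex0
        apply hcase2n
        intro j
        have h1 := hex0 j
        have h2 := hBeven j
        omega


/-- for positive integers `m ≤ n` with `m` even and `n` odd,
`γ'ₛ(K_{m,n}) = min {3m, max {2m, n+1}}`. -/
theorem stmt11 (m n : ℕ) (hm0 : 0 < m) (hmn : m ≤ n) (hm : Even m) (hn : Odd n) :
    IsLeast
      {s : ℤ | ∃ f : Sym2 (Fin m ⊕ Fin n) → ℤ,
        IsSEDF (completeBipartiteGraph (Fin m) (Fin n)) f ∧
          s = ∑ e ∈ (completeBipartiteGraph (Fin m) (Fin n)).edgeFinset, f e}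
      (min (3 * (m : ℤ)) (max (2 * (m : ℤ)) ((n : ℤ) + 1))) := by
  constructor
  · obtain ⟨h, hh2⟩ := hm
    obtain ⟨n', hn2⟩ := hn
    have hh1 : 1 ≤ h := by omega
    have hhn : h ≤ n' := by omega
    obtain ⟨f, hf, hsum⟩ := upper m n h n' hh1 hhn (by omega) (by omega)
    exact ⟨f, hf, hsum.symm⟩
  · rintro s ⟨f, hf, rfl⟩
    exact lower m n hm0 hmn hm hn f hf
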